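/- Let ℓ be a prime, P ∈ ℤ_ℓ[X] a monic polynomial of positive degree, and R = ℤ_ℓ[X]/(P). Let ι : N' → N be an injective homomorphism of finitely generated R-modules whose cokernel is torsion-free as a ℤ_ℓ-module. Then the restriction map Hom_R(N, R) → Hom_R(N', R), g ↦ g ∘ ι, is surjective; that is, every R-linear map N' → R extends along ι to an R-linear map N → R. (Equivalently, Ext¹_R(M, R) = 0 for every finitely generated R-module M that is ℤ_ℓ-torsion-free.) -/

import Mathlib

/-- The ring `R = ℤ_ℓ[X]/(P)`. -/
abbrev RquotP (ℓ : ℕ) [Fact ℓ.Prime] (P : Polynomial ℤ_[ℓ]) : Type :=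
  Polynomial ℤ_[ℓ] ⧸ Ideal.span {P}

/-- Auxiliary extension lemma: if `R` is an `A`-algebra such that the pairing
`(r,s) ↦ lam (r*s)` identifies `R` with its `A`-linear dual, and the cokernel of an
injective `R`-linear map `ι : N' → N` is projective over `A`, then every `R`-linear map
`N' → R` extends along `ι`. -/
theorem aux_ext {A R : Type} [CommRing A] [CommRing R] [Algebra A R]
    (lam : R →ₗ[A] A) (hbij : Function.Bijective ((LinearMap.mul A R).compr₂ lam))
    (N : Type) [AddCommGroup N] [Module A N] [Module R N] [IsScalarTower A R N]
    (N' : Type) [AddCommGroup N'] [Module A N'] [Module R N'] [IsScalarTower A R N']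
    (ι : N' →ₗ[R] N) (hinj : Function.Injective ι)
    [Module.Projective A (N ⧸ LinearMap.range ι)] :
    Function.Surjective (fun g : N →ₗ[R] R => g.comp ι) := by
  classical
  intro f
  set Φ : R →ₗ[A] Module.Dual A R := (LinearMap.mul A R).compr₂ lam with hΦdef
  have hΦapp : ∀ r s : R, Φ r s = lam (r * s) := fun r s => rfl
  set π := (LinearMap.range ι).mkQ with hπ
  obtain ⟨s, hs⟩ := Module.projective_lifting_property (π.restrictScalars A)
      (LinearMap.id) ((LinearMap.range ι).mkQ_surjective)
  have hs' : ∀ c, π (s c) = c := fun c => congrArg (fun h => h c) hs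
  set p : N →ₗ[A] N := LinearMap.id - s.comp (π.restrictScalars A) with hp
  have hmem : ∀ x : N, p x ∈ LinearMap.range ι := by
    intro x
    rw [← Submodule.ker_mkQ (LinearMap.range ι), LinearMap.mem_ker]
    show π (p x) = 0
    have hpx : p x = x - s (π x) := rfl
    rw [hpx, map_sub, hs', sub_self]
  set e := LinearEquiv.ofInjective ι hinj with he
  set ρ : N → N' := fun n => e.symm ⟨p n, hmem n⟩ with hρ
  have hρ_eq : ∀ (n : N) (m : N'), ι m = p n → ρ n = m := by
    intro n m h
    rw [hρ]
    rw [LinearEquiv.symm_apply_eq]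
    exact Subtype.ext (by simpa [he, LinearEquiv.ofInjective_apply] using h.symm)
  have hρ_ι : ∀ m : N', ρ (ι m) = m := by
    intro m
    refine hρ_eq _ _ ?_
    have h0 : π (ι m) = 0 := by
      rw [hπ, Submodule.mkQ_apply, Submodule.Quotient.mk_eq_zero]
      exact ⟨m, rfl⟩
    have hpx : p (ι m) = ι m - s (π (ι m)) := rfl
    rw [hpx, h0, map_zero, sub_zero]
  have hιρ : ∀ n : N, ι (ρ n) = p n := by
    intro n
    have h1 := e.apply_symm_apply ⟨p n, hmem n⟩
    have h2 := congrArg Subtype.val h1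
    rwa [he, LinearEquiv.ofInjective_apply] at h2
  have hρ_add : ∀ x y : N, ρ (x + y) = ρ x + ρ y := by
    intro x y
    refine hρ_eq _ _ ?_
    rw [map_add, hιρ, hιρ, map_add]
  have hρ_smul : ∀ (a : A) (x : N), ρ (a • x) = a • ρ x := by
    intro a x
    refine hρ_eq _ _ ?_
    have h1 : ι (a • ρ x) = a • ι (ρ x) := by
      rw [← algebraMap_smul R a (ρ x), map_smul, algebraMap_smul]
    rw [h1, hιρ, map_smul]
  set g₀ : N →ₗ[A] A :=
    { toFun := fun n => lam (f (ρ n))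
      map_add' := fun x y => by simp only [hρ_add, map_add]
      map_smul' := fun a x => by
        simp only [hρ_smul, RingHom.id_apply]
        rw [← algebraMap_smul R a (ρ x), map_smul, algebraMap_smul R a, map_smul] } with hg₀
  have hg₀ι : ∀ m : N', g₀ (ι m) = lam (f m) := by
    intro m; show lam (f (ρ (ι m))) = lam (f m); rw [hρ_ι]
  set Ψ := LinearEquiv.ofBijective Φ hbij with hΨ
  have hΨapp : ∀ r, Ψ r = Φ r := fun r => rfl
  set sm : N → (R →ₗ[A] N) := fun n => (LinearMap.toSpanSingleton R N n).restrictScalars A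
    with hsm
  have hsm_app : ∀ (n : N) (r : R), sm n r = r • n := fun n r => rfl
  set G : N → R := fun n => Ψ.symm (g₀.comp (sm n)) with hG
  have hGspec : ∀ (n : N) (t : R), lam (G n * t) = g₀ (t • n) := by
    intro n t
    have h1 : Φ (G n) = g₀.comp (sm n) := by
      rw [hG, ← hΨapp]; exact Ψ.apply_symm_apply _
    calc lam (G n * t) = Φ (G n) t := rfl
      _ = g₀ (t • n) := by rw [h1]; rfl
  have hΦinj : Function.Injective Φ := hbij.1
  have key_smul : ∀ (r : R) (n : N), G (r • n) = r * G n := by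
    intro r n
    apply hΦinj
    ext t
    have h1 : Φ (G (r • n)) t = g₀ (t • r • n) := hGspec _ _
    have h2 : Φ (r * G n) t = g₀ ((r * t) • n) := by
      calc Φ (r * G n) t = lam (G n * (r * t)) := by rw [hΦapp]; ring_nf
        _ = g₀ ((r * t) • n) := hGspec _ _
    rw [h1, h2, ← mul_smul, mul_comm r t, mul_smul]
  have key_add : ∀ x y : N, G (x + y) = G x + G y := by
    intro x y
    show Ψ.symm (g₀.comp (sm (x + y))) = Ψ.symm (g₀.comp (sm x)) + Ψ.symm (g₀.comp (sm y))
    have h1 : g₀.comp (sm (x + y)) = g₀.comp (sm x) + g₀.comp (sm y) := by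
      ext r
      simp only [LinearMap.comp_apply, LinearMap.add_apply, hsm_app, smul_add, map_add]
    rw [h1, map_add]
  refine ⟨{ toFun := G
            map_add' := key_add
            map_smul' := fun r n => by
              show G (r • n) = r • G n
              rw [key_smul, smul_eq_mul] }, ?_⟩
  ext m
  show G (ι m) = f m
  apply hΦinj
  ext t
  have h1 : Φ (G (ι m)) t = g₀ (t • ι m) := hGspec _ _
  have h2 : g₀ (t • ι m) = lam (f m * t) := by
    rw [← map_smul ι t m, hg₀ι, map_smul, smul_eq_mul, mul_comm]
  rw [h1, h2]
  rfl

/-- Let `R = ℤ_ℓ[X]/(P)` with `P` monic of positive degree, and let `ι : N' → N` be an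
injective homomorphism of finitely generated `R`-modules whose cokernel is torsion-free
over `ℤ_ℓ`.  Then every `R`-linear map `N' → R` extends along `ι` to an `R`-linear map
`N → R`; i.e. the restriction map `Hom_R(N, R) → Hom_R(N', R)` is surjective.
(Equivalently, `Ext¹_R(M, R) = 0` for finitely generated `ℤ_ℓ`-torsion-free `M`.) -/
theorem stmt_12 (ℓ : ℕ) [Fact ℓ.Prime] (P : Polynomial ℤ_[ℓ]) (hP : P.Monic)
    (hdeg : 0 < P.natDegree)
    (N : Type) [AddCommGroup N] [Module (RquotP ℓ P) N] [Module.Finite (RquotP ℓ P) N]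
    (N' : Type) [AddCommGroup N'] [Module (RquotP ℓ P) N'] [Module.Finite (RquotP ℓ P) N']
    (ι : N' →ₗ[RquotP ℓ P] N) (hinj : Function.Injective ι)
    (hcoker : ∀ (a : ℤ_[ℓ]) (x : N ⧸ LinearMap.range ι),
      algebraMap ℤ_[ℓ] (RquotP ℓ P) a • x = 0 → a = 0 ∨ x = 0) :
    Function.Surjective
      (fun g : N →ₗ[RquotP ℓ P] RquotP ℓ P => g.comp ι) := by
  classical
  have hsmul : ∀ (a : ℤ_[ℓ]) (r : RquotP ℓ P),
      a • r = algebraMap ℤ_[ℓ] (RquotP ℓ P) a * r := by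
    intro a r
    obtain ⟨q, rfl⟩ := Ideal.Quotient.mk_surjective r
    have h1 : a • (Ideal.Quotient.mk (Ideal.span {P}) q)
        = Ideal.Quotient.mk (Ideal.span {P}) (a • q) := rfl
    rw [h1, Polynomial.smul_eq_C_mul, map_mul]
    rfl
  letI : Module ℤ_[ℓ] N := Module.compHom N (algebraMap ℤ_[ℓ] (RquotP ℓ P))
  haveI : IsScalarTower ℤ_[ℓ] (RquotP ℓ P) N :=
    ⟨fun a r x => by rw [hsmul, mul_smul]; rfl⟩
  letI : Module ℤ_[ℓ] N' := Module.compHom N' (algebraMap ℤ_[ℓ] (RquotP ℓ P))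
  haveI : IsScalarTower ℤ_[ℓ] (RquotP ℓ P) N' :=
    ⟨fun a r x => by rw [hsmul, mul_smul]; rfl⟩
  -- the power basis 1, x, ..., x^(d-1)
  set B : PowerBasis ℤ_[ℓ] (RquotP ℓ P) := AdjoinRoot.powerBasis' hP with hB
  have hbd : B.dim = P.natDegree := rfl
  have hd0 : 0 < B.dim := hbd ▸ hdeg
  set lastIdx : Fin B.dim := ⟨B.dim - 1, by omega⟩ with hlast
  set lam : RquotP ℓ P →ₗ[ℤ_[ℓ]] ℤ_[ℓ] := B.basis.coord lastIdx with hlam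
  set Φ := (LinearMap.mul ℤ_[ℓ] (RquotP ℓ P)).compr₂ lam with hΦ
  set Mm := LinearMap.toMatrix B.basis B.basis.dualBasis Φ with hMm
  have hentry : ∀ i j : Fin B.dim, (j : ℕ) + (i : ℕ) < B.dim →
      Mm i j = if (j : ℕ) + (i : ℕ) = B.dim - 1 then 1 else 0 := by
    intro i j h
    rw [hMm, LinearMap.toMatrix_apply, Module.Basis.dualBasis_repr]
    show lam (B.basis j * B.basis i) = _
    rw [hlam, Module.Basis.coord_apply, B.coe_basis]
    show B.basis.repr (B.gen ^ (j : ℕ) * B.gen ^ (i : ℕ)) lastIdx = _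
    rw [← pow_add]
    have h2 : B.gen ^ ((j : ℕ) + (i : ℕ)) = B.basis ⟨(j : ℕ) + (i : ℕ), h⟩ := by
      rw [B.coe_basis]
    rw [h2, Module.Basis.repr_self, Finsupp.single_apply]
    simp only [hlast, Fin.ext_iff]
  have hdet' : (Mm.submatrix (Fin.revPerm : Equiv.Perm (Fin B.dim)) id).det = 1 := by
    rw [Matrix.det_of_upperTriangular]
    · apply Finset.prod_eq_one
      intro i _
      have hi : (i : ℕ) < B.dim := i.is_lt
      have hrev : ((Fin.rev i : Fin B.dim) : ℕ) = B.dim - ((i : ℕ) + 1) := Fin.val_rev i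
      show Mm (Fin.revPerm i) (id i) = 1
      rw [Fin.revPerm_apply, id_eq, hentry _ _ (by omega), if_pos (by omega)]
    · intro i j hij
      have hi : (i : ℕ) < B.dim := i.is_lt
      have hj : (j : ℕ) < (i : ℕ) := hij
      have hrev : ((Fin.rev i : Fin B.dim) : ℕ) = B.dim - ((i : ℕ) + 1) := Fin.val_rev i
      show Mm (Fin.revPerm i) (id j) = 0
      rw [Fin.revPerm_apply, id_eq, hentry _ _ (by omega), if_neg (by omega)]
  have hdet : IsUnit Mm.det := by
    have h := Matrix.det_permute (Fin.revPerm : Equiv.Perm (Fin B.dim)) Mm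
    rw [hdet'] at h
    exact IsUnit.of_mul_eq_one _ (by rw [mul_comm]; exact h.symm)
  have hbij : Function.Bijective Φ := by
    have hb := (LinearEquiv.ofIsUnitDet hdet).bijective
    have hco : ⇑(LinearEquiv.ofIsUnitDet hdet) = ⇑Φ :=
      congrArg DFunLike.coe (LinearEquiv.coe_ofIsUnitDet hdet)
    rwa [hco] at hb
  haveI : NoZeroSMulDivisors ℤ_[ℓ] (N ⧸ LinearMap.range ι) :=
    ⟨fun {a x} h => hcoker a x (by rwa [algebraMap_smul])⟩
  haveI : Module.Finite ℤ_[ℓ] (RquotP ℓ P) := Module.Finite.of_basis B.basis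
  haveI : Module.Finite ℤ_[ℓ] N := Module.Finite.trans (RquotP ℓ P) N
  haveI : Module.Finite ℤ_[ℓ] (N ⧸ LinearMap.range ι) :=
    Module.Finite.quotient ℤ_[ℓ] (LinearMap.range ι)
  haveI : Module.Free ℤ_[ℓ] (N ⧸ LinearMap.range ι) :=
    Module.free_of_finite_type_torsion_free'
  haveI : Module.Projective ℤ_[ℓ] (N ⧸ LinearMap.range ι) := Module.Projective.of_free
  exact aux_ext lam hbij N N' ι hinj
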